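/- For every λ > 1 and all integers n ≥ 1 and k ≥ 1, m_{2n}(λ) = (λ^{2kn} − 1)^{−1} · Σ_{j=0}^{n−1} C(2n, 2j) · m_{2j}(λ) · W^{(k)}_{2(n−j)}(λ). -/

import Mathlib

open MeasureTheory ProbabilityTheory Finset

/-- The quantity `W^(k)_(2m)(λ) = 2^(-(k-1)) ∑_{(i_1,…,i_(k-1)) ∈ {0,1}^(k-1)}
(1 + ∑_{j=1}^{k-1} (2 i_j - 1) λ^j)^(2m)`; for `k = 1` it equals `1`. -/
noncomputable def W (k mm : ℕ) (l : ℝ) : ℝ :=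
  (∑ i : Fin (k - 1) → Bool,
      (1 + ∑ j : Fin (k - 1), (2 * (if i j then (1 : ℝ) else 0) - 1) * l ^ ((j : ℕ) + 1))
        ^ (2 * mm)) / 2 ^ (k - 1)

set_option linter.unusedSectionVars false
set_option linter.unnecessarySeqFocus false
set_option linter.unreachableTactic false
set_option linter.unusedTactic false
set_option maxHeartbeats 1000000

open Filter Topology

namespace Stmt6Aux

noncomputable def evI (e : ℕ) : ℝ := if Even e then 1 else 0
def sg (b : Bool) : ℝ := if b then 1 else -1

section
variable {Ω : Type*} [MeasurableSpace Ω] (P : Measure Ω) [IsProbabilityMeasure P]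
    (X : ℕ → Ω → ℝ) (hmeas : ∀ n, Measurable (X n))
    (hindep : iIndepFun X P)
    (h1 : ∀ n, P {ω | X n ω = 1} = 1 / 2) (h2 : ∀ n, P {ω | X n ω = -1} = 1 / 2)
    {l : ℝ} (hl : 1 < l)


include hmeas h1 h2 in
lemma Xae (i : ℕ) : ∀ᵐ ω ∂P, X i ω = 1 ∨ X i ω = -1 := by
  have hms : MeasurableSet {ω | X i ω = 1} := (hmeas i) (measurableSet_singleton 1)
  have hms' : MeasurableSet {ω | X i ω = -1} := (hmeas i) (measurableSet_singleton (-1))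
  have hdisj : Disjoint {ω | X i ω = 1} {ω | X i ω = -1} := by
    rw [Set.disjoint_left]; intro ω hω hω'
    simp only [Set.mem_setOf_eq] at hω hω'; rw [hω] at hω'; norm_num at hω'
  have hun : P ({ω | X i ω = 1} ∪ {ω | X i ω = -1}) = 1 := by
    rw [measure_union hdisj hms', h1, h2]
    rw [ENNReal.div_add_div_same]; rw [one_add_one_eq_two]; exact ENNReal.div_self two_ne_zero ENNReal.ofNat_ne_top
  have := prob_compl_eq_zero_iff (hms.union hms') |>.mpr hun
  filter_upwards [MeasureTheory.measure_eq_zero_iff_ae_notMem.mp this] with ω hω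
  simpa [or_iff_not_imp_left] using hω

include hmeas h1 h2 in
lemma PX1 (i : ℕ) (e : ℕ) : ∫ ω, X i ω ^ e ∂P = evI e := by
  have hae := Xae P X hmeas h1 h2 i
  unfold evI
  by_cases he : Even e
  · rw [if_pos he]
    rw [integral_congr_ae (g := fun _ => (1:ℝ))]
    · simp
    · filter_upwards [hae] with ω hω
      rcases hω with h | h <;> rw [h]
      · exact one_pow e
      · exact he.neg_one_pow
  · rw [if_neg he]
    rw [Nat.not_even_iff_odd] at he
    rw [integral_congr_ae (g := fun ω => X i ω)]
    swap
    · filter_upwards [hae] with ω hω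
      rcases hω with h | h <;> rw [h]
      · exact one_pow e
      · exact he.neg_one_pow
    have hrw : (fun ω => X i ω) =ᵐ[P] fun ω =>
        ({ω | X i ω = 1}).indicator (fun _ => (1:ℝ)) ω
          - ({ω | X i ω = -1}).indicator (fun _ => (1:ℝ)) ω := by
      filter_upwards [hae] with ω hω
      rcases hω with h | h <;>
        simp [Set.indicator_apply, Set.mem_setOf_eq, h]  <;> norm_num
    rw [integral_congr_ae hrw]
    have hms : MeasurableSet {ω | X i ω = 1} := (hmeas i) (measurableSet_singleton 1)
    have hms' : MeasurableSet {ω | X i ω = -1} := (hmeas i) (measurableSet_singleton (-1))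
    rw [integral_sub ((integrable_const (1:ℝ)).indicator hms)
      ((integrable_const (1:ℝ)).indicator hms')]
    rw [integral_indicator_const _ hms, integral_indicator_const _ hms', measureReal_def, measureReal_def, h1, h2, sub_self]



include hmeas hindep h1 h2 in
lemma PXs (s : Finset ℕ) (a : ℕ → ℕ) :
    ∫ ω, ∏ i ∈ s, X i ω ^ a i ∂P = ∏ i ∈ s, evI (a i) := by
  classical
  set Z : ℕ → Ω → ℝ := fun j ω => X j ω ^ a j with hZ
  have hZmeas : ∀ j, Measurable (Z j) := fun j => (hmeas j).pow_const (a j)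
  have hZindep : iIndepFun Z P :=
    hindep.comp (fun j x => x ^ a j) (fun j => measurable_id.pow_const (a j))
  induction s using Finset.induction_on with
  | empty => simp
  | @insert i s hi ih =>
    have hfun : (∏ j ∈ s, Z j) = fun ω => ∏ j ∈ s, Z j ω :=
      funext fun ω => Finset.prod_apply ω s Z
    have hIF : IndepFun (fun ω => ∏ j ∈ s, Z j ω) (Z i) P := by
      rw [← hfun]; exact hZindep.indepFun_finsetProd_of_notMem hZmeas hi
    have hpm : Measurable (fun ω => ∏ j ∈ s, Z j ω) := s.measurable_prod (fun j _ => hZmeas j)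
    have hmul : ∫ ω, (∏ j ∈ s, Z j ω) * Z i ω ∂P
        = (∫ ω, ∏ j ∈ s, Z j ω ∂P) * ∫ ω, Z i ω ∂P :=
      hIF.integral_fun_mul_eq_mul_integral hpm.aestronglyMeasurable (hZmeas i).aestronglyMeasurable
    calc ∫ ω, ∏ j ∈ insert i s, X j ω ^ a j ∂P
        = ∫ ω, (∏ j ∈ s, Z j ω) * Z i ω ∂P := by
          refine integral_congr_ae (Filter.Eventually.of_forall fun ω => ?_)
          show ∏ j ∈ insert i s, Z j ω = _
          rw [Finset.prod_insert hi, mul_comm]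
      _ = (∫ ω, ∏ j ∈ s, Z j ω ∂P) * ∫ ω, Z i ω ∂P := hmul
      _ = (∏ j ∈ s, evI (a j)) * evI (a i) := by rw [ih, PX1 P X hmeas h1 h2 i (a i)]
      _ = ∏ j ∈ insert i s, evI (a j) := by rw [Finset.prod_insert hi, mul_comm]

include hmeas hindep h1 h2 in
lemma PXfin (r K : ℕ) (κ : Fin K → ℕ) :
    ∫ ω, ∏ i : Fin K, X (r + i) ω ^ κ i ∂P = ∏ i : Fin K, evI (κ i) := by
  classical
  set a : ℕ → ℕ := fun j => if h : j - r < K then κ ⟨j - r, h⟩ else 0 with ha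
  have hinj : Function.Injective (fun i : ℕ => r + i) := fun x y h => by
    simp only [] at h; omega
  have hkey : ∀ i : Fin K, a (r + i) = κ i := by
    intro i
    have h1 : r + (i : ℕ) - r = (i : ℕ) := by omega
    simp only [ha, h1, i.isLt, dif_pos, Fin.eta]
  have h2' : ∀ (f : ℕ → Ω → ℝ) (ω : Ω), ∏ i : Fin K, f (r + i) ω
      = ∏ j ∈ (Finset.range K).image (fun i => r + i), f j ω := by
    intro f ω
    rw [Finset.prod_image (fun x _ y _ h => hinj h), ← Fin.prod_univ_eq_prod_range]
  have hL : ∫ ω, ∏ i : Fin K, X (r + i) ω ^ κ i ∂P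
      = ∫ ω, ∏ j ∈ (Finset.range K).image (fun i => r + i), X j ω ^ a j ∂P := by
    refine integral_congr_ae (Filter.Eventually.of_forall fun ω => ?_)
    show ∏ i : Fin K, X (r + ↑i) ω ^ κ i = ∏ j ∈ (Finset.range K).image (fun i => r + i), X j ω ^ a j
    rw [← h2' (fun j ω => X j ω ^ a j) ω]
    exact Finset.prod_congr rfl fun i _ => by rw [hkey i]
  rw [hL, PXs P X hmeas hindep h1 h2]
  rw [Finset.prod_image (fun x _ y _ h => hinj h), ← Fin.prod_univ_eq_prod_range]
  exact Finset.prod_congr rfl fun i _ => by rw [hkey i]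


lemma PSfin (K : ℕ) (κ : Fin K → ℕ) :
    ∑ ε : Fin K → Bool, ∏ i : Fin K, sg (ε i) ^ κ i
      = 2 ^ K * ∏ i : Fin K, evI (κ i) := by
  classical
  rw [← Fintype.prod_sum (fun (i : Fin K) (b : Bool) => sg b ^ κ i)]
  have : ∀ i : Fin K, ∑ b : Bool, sg b ^ κ i = 2 * evI (κ i) := by
    intro i
    rw [Fintype.sum_bool]
    unfold sg evI
    by_cases he : Even (κ i)
    · simp [he, he.neg_one_pow]; norm_num
    · rw [Nat.not_even_iff_odd] at he
      simp [he, he.neg_one_pow, Nat.not_even_iff_odd.mpr he]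
  rw [Finset.prod_congr rfl fun i _ => this i, Finset.prod_mul_distrib,
    Finset.prod_const, Finset.card_univ, Fintype.card_fin]



/-- integrability from a.e. bound -/
lemma bddInt {f : Ω → ℝ} (hf : AEStronglyMeasurable f P) {C : ℝ}
    (hC : ∀ᵐ ω ∂P, |f ω| ≤ C) : Integrable f P :=
  Integrable.mono' (integrable_const C) hf (by simpa [Real.norm_eq_abs] using hC)

include hmeas h1 h2 in
lemma Xae_all : ∀ᵐ ω ∂P, ∀ i, X i ω = 1 ∨ X i ω = -1 :=
  (MeasureTheory.ae_all_iff).mpr fun i => Xae P X hmeas h1 h2 i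

include hmeas h1 h2 in
lemma monoInt (r K : ℕ) (κ : Fin K → ℕ) :
    Integrable (fun ω => ∏ i : Fin K, X (r + i) ω ^ κ i) P := by
  refine bddInt P (Measurable.aestronglyMeasurable ?_) (C := 1) ?_
  · exact Finset.measurable_prod _ (fun i _ => (hmeas (r + i)).pow_const _)
  · filter_upwards [Xae_all P X hmeas h1 h2] with ω hω
    rw [abs_prod]
    refine le_trans (Finset.prod_le_one (fun i _ => abs_nonneg _) fun i _ => ?_) le_rfl
    rw [abs_pow]
    rcases hω (r + i) with h | h <;> rw [h] <;> simp

include hmeas hindep h1 h2 in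
/-- the key block-moment identity -/
lemma blockMoment (r K : ℕ) (d : ℕ → ℝ) (nn : ℕ) :
    ∫ ω, (∑ i ∈ Finset.range K, d i * X (r + i) ω) ^ nn ∂P
      = (∑ ε : Fin K → Bool, (∑ i : Fin K, d i * sg (ε i)) ^ nn) / 2 ^ K := by
  classical
  have hpt : ∀ ω, (∑ i ∈ Finset.range K, d i * X (r + i) ω) ^ nn
      = ∑ κ ∈ piAntidiag (univ : Finset (Fin K)) nn,
          (Nat.multinomial univ κ * ∏ i : Fin K, d i ^ κ i) * ∏ i : Fin K, X (r + i) ω ^ κ i := by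
    intro ω
    rw [← Fin.sum_univ_eq_sum_range (fun i => d i * X (r + i) ω) K,
      Finset.sum_pow_eq_sum_piAntidiag]
    refine Finset.sum_congr rfl fun κ _ => ?_
    rw [mul_assoc]
    congr 1
    rw [← Finset.prod_mul_distrib]
    exact Finset.prod_congr rfl fun i _ => (mul_pow _ _ _)
  have hInt : ∀ κ : Fin K → ℕ, Integrable (fun ω =>
      (Nat.multinomial univ κ * ∏ i : Fin K, d i ^ κ i) * ∏ i : Fin K, X (r + i) ω ^ κ i) P :=
    fun κ => (monoInt P X hmeas h1 h2 r K κ).const_mul _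
  calc ∫ ω, (∑ i ∈ Finset.range K, d i * X (r + i) ω) ^ nn ∂P
      = ∫ ω, ∑ κ ∈ piAntidiag (univ : Finset (Fin K)) nn,
          (Nat.multinomial univ κ * ∏ i : Fin K, d i ^ κ i)
            * ∏ i : Fin K, X (r + i) ω ^ κ i ∂P := by
        exact integral_congr_ae (Filter.Eventually.of_forall fun ω => hpt ω)
    _ = ∑ κ ∈ piAntidiag (univ : Finset (Fin K)) nn,
          (Nat.multinomial univ κ * ∏ i : Fin K, d i ^ κ i) * ∏ i : Fin K, evI (κ i) := by
        rw [integral_finset_sum _ (fun κ _ => hInt κ)]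
        exact Finset.sum_congr rfl fun κ _ => by
          rw [MeasureTheory.integral_const_mul, PXfin P X hmeas hindep h1 h2 r K κ]
    _ = (∑ ε : Fin K → Bool, (∑ i : Fin K, d i * sg (ε i)) ^ nn) / 2 ^ K := by
        have head : ∀ ε : Fin K → Bool, (∑ i : Fin K, d i * sg (ε i)) ^ nn
            = ∑ κ ∈ piAntidiag (univ : Finset (Fin K)) nn,
                (Nat.multinomial univ κ * ∏ i : Fin K, d i ^ κ i)
                  * ∏ i : Fin K, sg (ε i) ^ κ i := by
          intro ε
          rw [show (∑ i : Fin K, d i * sg (ε i)) = ∑ i ∈ (univ : Finset (Fin K)), d i * sg (ε i)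
            from rfl, Finset.sum_pow_eq_sum_piAntidiag]
          refine Finset.sum_congr rfl fun κ _ => ?_
          rw [mul_assoc]
          congr 1
          rw [← Finset.prod_mul_distrib]
          exact Finset.prod_congr rfl fun i _ => (mul_pow _ _ _)
        rw [Finset.sum_congr rfl fun ε _ => head ε, Finset.sum_comm]
        rw [Finset.sum_congr rfl fun κ _ => (by rw [← Finset.mul_sum, PSfin] :
          (∑ ε : Fin K → Bool, (Nat.multinomial univ κ * ∏ i : Fin K, d i ^ κ i)
              * ∏ i : Fin K, sg (ε i) ^ κ i)
            = (Nat.multinomial univ κ * ∏ i : Fin K, d i ^ κ i)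
                * (2 ^ K * ∏ i : Fin K, evI (κ i)))]
        rw [Finset.sum_div]
        refine Finset.sum_congr rfl fun κ _ => ?_
        field_simp

include hmeas hindep h1 h2 in
lemma blockMomentOdd (r K : ℕ) (d : ℕ → ℝ) {nn : ℕ} (hnn : Odd nn) :
    ∫ ω, (∑ i ∈ Finset.range K, d i * X (r + i) ω) ^ nn ∂P = 0 := by
  rw [blockMoment P X hmeas hindep h1 h2 r K d nn]
  have hinv : Function.Involutive (fun ε : Fin K → Bool => fun i => !ε i) := by
    intro ε; funext i; simp
  have hsum : (∑ ε : Fin K → Bool, (∑ i : Fin K, d i * sg (ε i)) ^ nn)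
      = ∑ ε : Fin K → Bool, (∑ i : Fin K, d i * sg (!ε i)) ^ nn := by
    exact (Fintype.sum_bijective _ hinv.bijective _ _ (fun ε => rfl)).symm
  have hneg : ∀ ε : Fin K → Bool, (∑ i : Fin K, d i * sg (!ε i)) ^ nn
      = -((∑ i : Fin K, d i * sg (ε i)) ^ nn) := by
    intro ε
    have : (∑ i : Fin K, d i * sg (!ε i)) = -(∑ i : Fin K, d i * sg (ε i)) := by
      rw [← Finset.sum_neg_distrib]
      refine Finset.sum_congr rfl fun i _ => ?_
      cases ε i <;> simp [sg]
    rw [this, hnn.neg_pow]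
  have h0 : (∑ ε : Fin K → Bool, (∑ i : Fin K, d i * sg (ε i)) ^ nn) = 0 := by
    have := hsum
    rw [Finset.sum_congr rfl fun ε _ => hneg ε, Finset.sum_neg_distrib] at this
    linarith
  rw [h0, zero_div]

include hmeas hindep in
lemma crossBlock (k N a b : ℕ) (d e : ℕ → ℝ) :
    ∫ ω, (∑ i ∈ Finset.range k, d i * X (0 + i) ω) ^ a
        * (∑ i ∈ Finset.range N, e i * X (k + i) ω) ^ b ∂P
      = (∫ ω, (∑ i ∈ Finset.range k, d i * X (0 + i) ω) ^ a ∂P)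
        * ∫ ω, (∑ i ∈ Finset.range N, e i * X (k + i) ω) ^ b ∂P := by
  classical
  set S₁ : Finset ℕ := Finset.range k with hS₁
  set T₁ : Finset ℕ := (Finset.range N).image (fun i => k + i) with hT₁
  have hdisj : Disjoint S₁ T₁ := by
    rw [Finset.disjoint_left]
    intro x hx hx'
    simp only [hS₁, Finset.mem_range] at hx
    simp only [hT₁, Finset.mem_image, Finset.mem_range] at hx'
    omega
  have hbase := hindep.indepFun_finset S₁ T₁ hdisj hmeas
  set φ : (S₁ → ℝ) → ℝ := fun v => (∑ j ∈ S₁.attach, d j.1 * v j) ^ a with hφ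
  set ψ : (T₁ → ℝ) → ℝ := fun v => (∑ j ∈ T₁.attach, e (j.1 - k) * v j) ^ b with hψ
  have hφm : Measurable φ :=
    (Finset.measurable_sum _ (fun j _ => (measurable_pi_apply j).const_mul _)).pow_const a
  have hψm : Measurable ψ :=
    (Finset.measurable_sum _ (fun j _ => (measurable_pi_apply j).const_mul _)).pow_const b
  have hIF := (hbase.comp hφm hψm)
  have hcompφ : (φ ∘ fun ω (i : S₁) => X i ω) = fun ω =>
      (∑ i ∈ Finset.range k, d i * X (0 + i) ω) ^ a := by
    funext ω
    simp only [Function.comp_apply, hφ]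
    congr 1
    rw [Finset.sum_attach S₁ (fun j => d j * X j ω)]
    exact Finset.sum_congr rfl fun i hi => by rw [Nat.zero_add]
  have hcompψ : (ψ ∘ fun ω (i : T₁) => X i ω) = fun ω =>
      (∑ i ∈ Finset.range N, e i * X (k + i) ω) ^ b := by
    funext ω
    simp only [Function.comp_apply, hψ]
    congr 1
    rw [Finset.sum_attach T₁ (fun j => e (j - k) * X j ω), hT₁,
      Finset.sum_image (fun x _ y _ h => by omega)]
    exact Finset.sum_congr rfl fun i hi => by
      congr 2
      omega
  rw [hcompφ, hcompψ] at hIF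
  have hφms : Measurable fun ω => (∑ i ∈ Finset.range k, d i * X (0 + i) ω) ^ a :=
    (Finset.measurable_sum _ (fun j _ => (hmeas _).const_mul _)).pow_const a
  have hψms : Measurable fun ω => (∑ i ∈ Finset.range N, e i * X (k + i) ω) ^ b :=
    (Finset.measurable_sum _ (fun j _ => (hmeas _).const_mul _)).pow_const b
  exact hIF.integral_fun_mul_eq_mul_integral hφms.aestronglyMeasurable hψms.aestronglyMeasurable


include hl in
lemma csummable : Summable (fun i : ℕ => l⁻¹ ^ (i + 1)) := by
  have h0 : 0 < l := lt_trans one_pos hl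
  have : Summable (fun i : ℕ => l⁻¹ ^ i) :=
    summable_geometric_of_lt_one (by positivity) (inv_lt_one_of_one_lt₀ hl)
  simpa [pow_succ, mul_comm] using this.mul_right l⁻¹

include hl in
lemma cpos (i : ℕ) : 0 < l⁻¹ ^ (i + 1) := by
  have h0 : 0 < l := lt_trans one_pos hl
  positivity

-- pointwise facts for good ω
include hl in
lemma ptSummable {ω : Ω} (hω : ∀ i, X i ω = 1 ∨ X i ω = -1) (r : ℕ) :
    Summable (fun i : ℕ => l⁻¹ ^ (i + 1) * X (r + i) ω) := by
  refine Summable.of_norm_bounded (csummable hl) fun i => ?_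
  have h1' : |X (r + i) ω| ≤ 1 := by rcases hω (r + i) with h | h <;> rw [h] <;> simp
  have := cpos hl (i := i)
  calc ‖l⁻¹ ^ (i + 1) * X (r + i) ω‖ = l⁻¹ ^ (i + 1) * |X (r + i) ω| := by
        rw [Real.norm_eq_abs, abs_mul, abs_of_pos this]
    _ ≤ l⁻¹ ^ (i + 1) * 1 := by nlinarith
    _ = l⁻¹ ^ (i + 1) := mul_one _

include hl in
lemma ptPartialBound {ω : Ω} (hω : ∀ i, X i ω = 1 ∨ X i ω = -1) (r N : ℕ) :
    |∑ i ∈ Finset.range N, l⁻¹ ^ (i + 1) * X (r + i) ω| ≤ ∑' i : ℕ, l⁻¹ ^ (i + 1) := by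
  refine le_trans (Finset.abs_sum_le_sum_abs _ _) ?_
  refine le_trans (Finset.sum_le_sum (fun i (_ : i ∈ Finset.range N) => ?_))
    (Summable.sum_le_tsum (Finset.range N) (fun i _ => (cpos hl i).le) (csummable hl))
  have h1' : |X (r + i) ω| ≤ 1 := by rcases hω (r + i) with h | h <;> rw [h] <;> simp
  have := cpos hl (i := i)
  rw [abs_mul, abs_of_pos this]
  nlinarith

include hl in
lemma ptTailBound {ω : Ω} (hω : ∀ i, X i ω = 1 ∨ X i ω = -1) (r : ℕ) :
    |∑' i : ℕ, l⁻¹ ^ (i + 1) * X (r + i) ω| ≤ ∑' i : ℕ, l⁻¹ ^ (i + 1) := by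
  have hs := ptSummable X hl hω r
  have hsn : Summable (fun i : ℕ => ‖l⁻¹ ^ (i + 1) * X (r + i) ω‖) := by
    simpa only [Real.norm_eq_abs] using hs.abs
  have hstep1 : ‖∑' i : ℕ, l⁻¹ ^ (i + 1) * X (r + i) ω‖
      ≤ ∑' i : ℕ, ‖l⁻¹ ^ (i + 1) * X (r + i) ω‖ := norm_tsum_le_tsum_norm hsn
  rw [Real.norm_eq_abs] at hstep1
  refine le_trans hstep1 (Summable.tsum_le_tsum (fun i => ?_) hsn (csummable hl))
  have h1' : |X (r + i) ω| ≤ 1 := by rcases hω (r + i) with h | h <;> rw [h] <;> simp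
  have := cpos hl (i := i)
  rw [Real.norm_eq_abs, abs_mul, abs_of_pos this]
  nlinarith

include hmeas h1 h2 hl in
lemma tendBlock (r b : ℕ) (g : Ω → ℝ) (hg : Measurable g) (D : ℝ)
    (hgb : ∀ᵐ ω ∂P, |g ω| ≤ D) :
    Tendsto (fun N => ∫ ω, g ω * (∑ i ∈ Finset.range N, l⁻¹ ^ (i + 1) * X (r + i) ω) ^ b ∂P)
      atTop (𝓝 (∫ ω, g ω * (∑' i : ℕ, l⁻¹ ^ (i + 1) * X (r + i) ω) ^ b ∂P)) := by
  set B := ∑' i : ℕ, l⁻¹ ^ (i + 1) with hB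
  refine tendsto_integral_of_dominated_convergence (fun _ => |D| * B ^ b) ?_ ?_ ?_ ?_
  · intro N
    exact (hg.mul ((Finset.measurable_sum _
      (fun i _ => (hmeas (r + i)).const_mul _)).pow_const b)).aestronglyMeasurable
  · exact integrable_const _
  · intro N
    filter_upwards [Xae_all P X hmeas h1 h2, hgb] with ω hω hgω
    have hb := ptPartialBound X hl hω r N
    have hB0 : (0:ℝ) ≤ B := le_trans (abs_nonneg (0:ℝ))
      (by simpa only [Finset.range_zero, Finset.sum_empty] using ptPartialBound X hl hω r 0)
    rw [Real.norm_eq_abs, abs_mul, abs_pow]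
    have h1' : |g ω| ≤ |D| := le_trans hgω (le_abs_self D)
    have h2' : |∑ i ∈ Finset.range N, l⁻¹ ^ (i + 1) * X (r + i) ω| ^ b ≤ B ^ b :=
      pow_le_pow_left₀ (abs_nonneg _) hb b
    have := abs_nonneg (∑ i ∈ Finset.range N, l⁻¹ ^ (i + 1) * X (r + i) ω)
    have hBb : (0:ℝ) ≤ B ^ b := pow_nonneg hB0 b
    nlinarith [abs_nonneg (g ω), pow_nonneg this b]
  · filter_upwards [Xae_all P X hmeas h1 h2] with ω hω
    have hs := (ptSummable X hl hω r).hasSum.tendsto_sum_nat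
    exact (Tendsto.pow hs b).const_mul (g ω)


end

lemma Wzero (k : ℕ) (l : ℝ) : W k 0 l = 1 := by
  unfold W
  simp [Finset.card_univ]

lemma Wsg (k mm : ℕ) (l : ℝ) : W k mm l =
    (∑ ε : Fin (k - 1) → Bool,
      (1 + ∑ j : Fin (k - 1), sg (ε j) * l ^ ((j : ℕ) + 1)) ^ (2 * mm)) / 2 ^ (k - 1) := by
  unfold W
  congr 1
  refine Finset.sum_congr rfl fun ε _ => ?_
  congr 2
  refine Finset.sum_congr rfl fun j _ => ?_
  cases h : ε j <;> simp [sg, h] <;> norm_num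

lemma qW {l : ℝ} (hl : 1 < l) {k : ℕ} (hk : 1 ≤ k) (u : ℕ) :
    (∑ ε : Fin k → Bool, (∑ i : Fin k, l⁻¹ ^ ((i : ℕ) + 1) * sg (ε i)) ^ (2 * u)) / 2 ^ k
      = (l⁻¹ ^ k) ^ (2 * u) * W k u l := by
  have hl0 : l ≠ 0 := by positivity
  -- Step 1: factor l⁻¹ ^ k
  have step1 : ∀ ε : Fin k → Bool, (∑ i : Fin k, l⁻¹ ^ ((i : ℕ) + 1) * sg (ε i))
      = l⁻¹ ^ k * ∑ i : Fin k, l ^ (k - 1 - (i : ℕ)) * sg (ε i) := by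
    intro ε
    rw [Finset.mul_sum]
    refine Finset.sum_congr rfl fun i _ => ?_
    rw [← mul_assoc]
    congr 1
    have hi := i.isLt
    have hsplit : l⁻¹ ^ k = l⁻¹ ^ (k - 1 - (i : ℕ)) * l⁻¹ ^ ((i : ℕ) + 1) := by
      rw [← pow_add]; congr 1; omega
    rw [hsplit, mul_comm (l⁻¹ ^ (k - 1 - (i : ℕ))), mul_assoc, ← mul_pow, inv_mul_cancel₀ hl0,
      one_pow, mul_one]
  -- Step 2: reverse the inner index
  have step2 : (∑ ε : Fin k → Bool, (∑ i : Fin k, l ^ (k - 1 - (i : ℕ)) * sg (ε i)) ^ (2 * u))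
      = ∑ ε : Fin k → Bool, (∑ i : Fin k, l ^ (i : ℕ) * sg (ε i)) ^ (2 * u) := by
    have hout : ∀ ε : Fin k → Bool,
        (∑ i : Fin k, l ^ (k - 1 - (i : ℕ)) * sg (ε i))
          = ∑ i : Fin k, l ^ (i : ℕ) * sg ((ε ∘ Fin.rev) i) := by
      intro ε
      rw [← Equiv.sum_comp (Fin.revPerm (n := k)) (fun i => l ^ (i.val) * sg ((ε ∘ Fin.rev) i))]
      refine Finset.sum_congr rfl fun i _ => ?_
      simp only [Fin.revPerm_apply, Function.comp_apply, Fin.rev_rev]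
      congr 2
      rw [Fin.val_rev]
      omega
    rw [Finset.sum_congr rfl fun ε _ => by rw [hout ε]]
    have hb : Function.Bijective (fun ε : Fin k → Bool => ε ∘ Fin.rev) := by
      have : Function.Involutive (fun ε : Fin k → Bool => ε ∘ Fin.rev) := by
        intro ε; funext i; simp [Function.comp, Fin.rev_rev]
      exact this.bijective
    exact Fintype.sum_bijective _ hb _ _ (fun ε => rfl)
  -- Step 3: split off coordinate 0 (with k = K + 1)
  obtain ⟨K, rfl⟩ : ∃ K, k = K + 1 := ⟨k - 1, by omega⟩
  have step3 : (∑ ε : Fin (K + 1) → Bool, (∑ i : Fin (K + 1), l ^ (i : ℕ) * sg (ε i)) ^ (2 * u))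
      = 2 * ∑ ε : Fin K → Bool,
          (1 + ∑ j : Fin K, sg (ε j) * l ^ ((j : ℕ) + 1)) ^ (2 * u) := by
    rw [← (Fin.consEquiv (fun _ : Fin (K + 1) => Bool)).sum_comp
      (fun ε => (∑ i : Fin (K + 1), l ^ (i.val) * sg (ε i)) ^ (2 * u))]
    rw [Fintype.sum_prod_type]
    have inner : ∀ (b : Bool) (ε : Fin K → Bool),
        (∑ i : Fin (K + 1), l ^ (i.val) * sg ((Fin.consEquiv (fun _ : Fin (K+1) => Bool)) (b, ε) i))
          = sg b + ∑ j : Fin K, sg (ε j) * l ^ ((j : ℕ) + 1) := by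
      intro b ε
      simp only [Fin.consEquiv_apply]
      rw [Fin.sum_univ_succ]
      simp only [Fin.cons_zero, Fin.cons_succ, Fin.val_zero, pow_zero, one_mul, Fin.val_succ]
      congr 1
      exact Finset.sum_congr rfl fun j _ => by ring
    have hneg : (∑ ε : Fin K → Bool,
          (sg false + ∑ j : Fin K, sg (ε j) * l ^ ((j : ℕ) + 1)) ^ (2 * u))
        = ∑ ε : Fin K → Bool,
          (1 + ∑ j : Fin K, sg (ε j) * l ^ ((j : ℕ) + 1)) ^ (2 * u) := by
      have hb : Function.Bijective (fun ε : Fin K → Bool => fun i => !ε i) := by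
        have : Function.Involutive (fun ε : Fin K → Bool => fun i => !ε i) := by
          intro ε; funext i; simp
        exact this.bijective
      rw [← Fintype.sum_bijective _ hb _
        (fun ε => (sg false + ∑ j : Fin K, sg (ε j) * l ^ ((j : ℕ) + 1)) ^ (2 * u)) (fun ε => rfl)]
      refine Finset.sum_congr rfl fun ε _ => ?_
      show (sg false + ∑ j : Fin K, sg (!ε j) * l ^ ((j : ℕ) + 1)) ^ (2 * u) = _
      have key : (sg false + ∑ j : Fin K, sg (!ε j) * l ^ ((j : ℕ) + 1))
          = -(1 + ∑ j : Fin K, sg (ε j) * l ^ ((j : ℕ) + 1)) := by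
        have h1 : sg false = -(1:ℝ) := rfl
        rw [h1, neg_add, ← Finset.sum_neg_distrib]
        congr 1
        refine Finset.sum_congr rfl fun j _ => ?_
        cases h : ε j <;> simp [sg, h] <;> ring
      rw [key, Even.neg_pow (even_two_mul u)]
    rw [Fintype.sum_bool]
    have htrue : (∑ y : Fin K → Bool, (∑ i : Fin (K + 1),
          l ^ (i.val) * sg ((Fin.consEquiv (fun _ : Fin (K+1) => Bool)) (true, y) i)) ^ (2 * u))
        = ∑ ε : Fin K → Bool, (1 + ∑ j : Fin K, sg (ε j) * l ^ ((j : ℕ) + 1)) ^ (2 * u) :=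
      Finset.sum_congr rfl fun ε _ => by rw [inner true ε]; norm_num [sg]
    have hfalse : (∑ y : Fin K → Bool, (∑ i : Fin (K + 1),
          l ^ (i.val) * sg ((Fin.consEquiv (fun _ : Fin (K+1) => Bool)) (false, y) i)) ^ (2 * u))
        = ∑ ε : Fin K → Bool, (sg false + ∑ j : Fin K, sg (ε j) * l ^ ((j : ℕ) + 1)) ^ (2 * u) :=
      Finset.sum_congr rfl fun ε _ => by rw [inner false ε]
    rw [htrue, hfalse, hneg]; ring
  rw [Finset.sum_congr rfl fun ε _ => by rw [step1 ε, mul_pow]]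
  rw [← Finset.mul_sum, step2, step3, Wsg]
  have hK : K + 1 - 1 = K := by omega
  rw [hK]
  rw [mul_div_assoc, mul_div_assoc]
  congr 1
  rw [pow_succ]
  field_simp


end Stmt6Aux
/-- `m_(2n)(λ) = (λ^(2kn) - 1)⁻¹ ∑_{j=0}^{n-1} C(2n,2j) m_(2j)(λ) W^(k)_(2(n-j))(λ)`. -/
theorem stmt_6 {Ω : Type*} [MeasurableSpace Ω] (P : Measure Ω) [IsProbabilityMeasure P]
    (X : ℕ → Ω → ℝ) (hmeas : ∀ n, Measurable (X n))
    (hindep : iIndepFun X P)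
    (h1 : ∀ n, P {ω | X n ω = 1} = 1 / 2) (h2 : ∀ n, P {ω | X n ω = -1} = 1 / 2)
    (S : ℝ → Ω → ℝ)
    (hS : ∀ l : ℝ, 1 < l → ∀ ω, S l ω = ∑' n : ℕ, l ^ (-(n + 1 : ℤ)) * X n ω)
    (m : ℝ → ℕ → ℝ) (hm : ∀ l k, m l k = ∫ ω, (S l ω) ^ k ∂P)
    (l : ℝ) (hl : 1 < l) (n : ℕ) (hn : 1 ≤ n) (k : ℕ) (hk : 1 ≤ k) :
    m l (2 * n) = (l ^ (2 * k * n) - 1)⁻¹ *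
      ∑ j ∈ Finset.range n, ((2 * n).choose (2 * j) : ℝ) * m l (2 * j) * W k (n - j) l := by
  classical
  have hl0 : (0:ℝ) < l := lt_trans one_pos hl
  have h_ae := Stmt6Aux.Xae_all P X hmeas h1 h2
  have hB0 : (0:ℝ) ≤ ∑' i : ℕ, l⁻¹ ^ (i + 1) :=
    tsum_nonneg (fun i => (Stmt6Aux.cpos hl i).le)
  -- identify the coefficients
  have hSeq : ∀ ω, S l ω = ∑' i : ℕ, l⁻¹ ^ (i + 1) * X (0 + i) ω := by
    intro ω
    rw [hS l hl ω]
    refine tsum_congr fun i => ?_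
    congr 1
    · rw [show (-(i + 1 : ℤ)) = -((i + 1 : ℕ) : ℤ) by push_cast; ring, zpow_neg,
        zpow_natCast, inv_pow]
    · rw [Nat.zero_add]
  have hm2 : ∀ j, m l j = ∫ ω, (∑' i : ℕ, l⁻¹ ^ (i + 1) * X (0 + i) ω) ^ j ∂P := by
    intro j; rw [hm l j]
    refine integral_congr_ae (Filter.Eventually.of_forall fun ω => ?_)
    show S l ω ^ j = _
    rw [hSeq ω]
  -- measurability
  have hYmeas : ∀ r N, Measurable (fun ω => ∑ i ∈ Finset.range N, l⁻¹ ^ (i + 1) * X (r + i) ω) :=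
    fun r N => Finset.measurable_sum _ (fun i _ => (hmeas (r + i)).const_mul _)
  have hTasm : AEStronglyMeasurable (fun ω => ∑' i : ℕ, l⁻¹ ^ (i + 1) * X (k + i) ω) P := by
    refine aestronglyMeasurable_of_tendsto_ae atTop
      (fun N => (hYmeas k N).aestronglyMeasurable) ?_
    filter_upwards [h_ae] with ω hω
    exact (Stmt6Aux.ptSummable X hl hω k).hasSum.tendsto_sum_nat
  -- limits of single-block moments
  have tendBlock0 : ∀ r b, Filter.Tendsto
      (fun N => ∫ ω, (∑ i ∈ Finset.range N, l⁻¹ ^ (i + 1) * X (r + i) ω) ^ b ∂P)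
      Filter.atTop (𝓝 (∫ ω, (∑' i : ℕ, l⁻¹ ^ (i + 1) * X (r + i) ω) ^ b ∂P)) := by
    intro r b
    have h := Stmt6Aux.tendBlock P X hmeas h1 h2 hl r b (fun _ => 1) measurable_const 1
      (Filter.Eventually.of_forall fun ω => by norm_num)
    simpa only [one_mul] using h
  -- tail moments equal the moments of S
  have hTmom : ∀ b, ∫ ω, (∑' i : ℕ, l⁻¹ ^ (i + 1) * X (k + i) ω) ^ b ∂P = m l b := by
    intro b
    have hk' := tendBlock0 k b
    have h0' := tendBlock0 0 b
    have heqseq : (fun N => ∫ ω, (∑ i ∈ Finset.range N, l⁻¹ ^ (i + 1) * X (k + i) ω) ^ b ∂P)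
        = (fun N => ∫ ω, (∑ i ∈ Finset.range N, l⁻¹ ^ (i + 1) * X (0 + i) ω) ^ b ∂P) := by
      funext N
      rw [Stmt6Aux.blockMoment P X hmeas hindep h1 h2 k N _ b,
        Stmt6Aux.blockMoment P X hmeas hindep h1 h2 0 N _ b]
    rw [heqseq] at hk'
    rw [hm2 b]
    exact tendsto_nhds_unique hk' h0'
  -- cross factorization
  have hYb : ∀ᵐ ω ∂P, |(∑ i ∈ Finset.range k, l⁻¹ ^ (i + 1) * X (0 + i) ω)|
      ≤ ∑' i : ℕ, l⁻¹ ^ (i + 1) := by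
    filter_upwards [h_ae] with ω hω
    exact Stmt6Aux.ptPartialBound X hl hω 0 k
  have hcross : ∀ a b, ∫ ω, (∑ i ∈ Finset.range k, l⁻¹ ^ (i + 1) * X (0 + i) ω) ^ a
      * (∑' i : ℕ, l⁻¹ ^ (i + 1) * X (k + i) ω) ^ b ∂P
      = (∫ ω, (∑ i ∈ Finset.range k, l⁻¹ ^ (i + 1) * X (0 + i) ω) ^ a ∂P) * m l b := by
    intro a b
    have hfact : ∀ N, ∫ ω, (∑ i ∈ Finset.range k, l⁻¹ ^ (i + 1) * X (0 + i) ω) ^ a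
        * (∑ i ∈ Finset.range N, l⁻¹ ^ (i + 1) * X (k + i) ω) ^ b ∂P
        = (∫ ω, (∑ i ∈ Finset.range k, l⁻¹ ^ (i + 1) * X (0 + i) ω) ^ a ∂P)
          * ∫ ω, (∑ i ∈ Finset.range N, l⁻¹ ^ (i + 1) * X (k + i) ω) ^ b ∂P :=
      fun N => Stmt6Aux.crossBlock P X hmeas hindep k N a b
        (fun i => l⁻¹ ^ (i + 1)) (fun i => l⁻¹ ^ (i + 1))
    have hlim1 := Stmt6Aux.tendBlock P X hmeas h1 h2 hl k b
      (fun ω => (∑ i ∈ Finset.range k, l⁻¹ ^ (i + 1) * X (0 + i) ω) ^ a)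
      ((hYmeas 0 k).pow_const a) ((∑' i : ℕ, l⁻¹ ^ (i + 1)) ^ a)
      (by filter_upwards [hYb] with ω hω
          rw [abs_pow]
          exact pow_le_pow_left₀ (abs_nonneg _) hω a)
    rw [funext hfact] at hlim1
    have hlim2 := (tendBlock0 k b).const_mul
      (∫ ω, (∑ i ∈ Finset.range k, l⁻¹ ^ (i + 1) * X (0 + i) ω) ^ a ∂P)
    have := tendsto_nhds_unique hlim1 hlim2
    rw [this, hTmom b]
  -- values of the prefix-block moments
  have hqeven : ∀ u, ∫ ω, (∑ i ∈ Finset.range k, l⁻¹ ^ (i + 1) * X (0 + i) ω) ^ (2 * u) ∂P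
      = (l⁻¹ ^ k) ^ (2 * u) * W k u l := by
    intro u
    rw [Stmt6Aux.blockMoment P X hmeas hindep h1 h2 0 k _ (2 * u)]
    exact Stmt6Aux.qW hl hk u
  have hqodd : ∀ i, Odd i →
      ∫ ω, (∑ i' ∈ Finset.range k, l⁻¹ ^ (i' + 1) * X (0 + i') ω) ^ i ∂P = 0 :=
    fun i hi => Stmt6Aux.blockMomentOdd P X hmeas hindep h1 h2 0 k _ hi
  -- decomposition of the series
  have hdecomp : ∀ᵐ ω ∂P, (∑' i : ℕ, l⁻¹ ^ (i + 1) * X (0 + i) ω)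
      = (∑ i ∈ Finset.range k, l⁻¹ ^ (i + 1) * X (0 + i) ω)
        + l⁻¹ ^ k * ∑' i : ℕ, l⁻¹ ^ (i + 1) * X (k + i) ω := by
    filter_upwards [h_ae] with ω hω
    have hsum := Stmt6Aux.ptSummable X hl hω 0
    rw [← Summable.sum_add_tsum_nat_add k hsum]
    congr 1
    rw [← tsum_mul_left]
    refine tsum_congr fun i => ?_
    rw [show 0 + (i + k) = k + i from by omega,
      show l⁻¹ ^ (i + k + 1) = l⁻¹ ^ k * l⁻¹ ^ (i + 1) from by rw [← pow_add]; congr 1; omega,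
      mul_assoc]
  -- integrability of the binomial terms
  have hIntTerm : ∀ i, Integrable (fun ω =>
      (∑ i' ∈ Finset.range k, l⁻¹ ^ (i' + 1) * X (0 + i') ω) ^ i
        * (l⁻¹ ^ k * ∑' i' : ℕ, l⁻¹ ^ (i' + 1) * X (k + i') ω) ^ (2 * n - i)
        * ((2 * n).choose i : ℝ)) P := by
    intro i
    refine Stmt6Aux.bddInt P ?_
      (C := (∑' i' : ℕ, l⁻¹ ^ (i' + 1)) ^ i
        * (l⁻¹ ^ k * ∑' i' : ℕ, l⁻¹ ^ (i' + 1)) ^ (2 * n - i) * ((2 * n).choose i : ℝ)) ?_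
    · exact ((((hYmeas 0 k).pow_const i).aestronglyMeasurable.mul
        ((hTasm.const_mul _).pow _)).mul (aestronglyMeasurable_const))
    · filter_upwards [h_ae] with ω hω
      have hYω := Stmt6Aux.ptPartialBound X hl hω 0 k
      have hTω := Stmt6Aux.ptTailBound X hl hω k
      have hik : (0:ℝ) ≤ l⁻¹ ^ k := by positivity
      rw [abs_mul, abs_mul, abs_pow, abs_pow, Nat.abs_cast, abs_mul, abs_of_nonneg hik]
      have hb1 : |∑ i' ∈ Finset.range k, l⁻¹ ^ (i' + 1) * X (0 + i') ω| ^ i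
          ≤ (∑' i' : ℕ, l⁻¹ ^ (i' + 1)) ^ i := pow_le_pow_left₀ (abs_nonneg _) hYω i
      have hTle : l⁻¹ ^ k * |∑' i' : ℕ, l⁻¹ ^ (i' + 1) * X (k + i') ω|
          ≤ l⁻¹ ^ k * ∑' i' : ℕ, l⁻¹ ^ (i' + 1) := mul_le_mul_of_nonneg_left hTω hik
      have hb2 : (l⁻¹ ^ k * |∑' i' : ℕ, l⁻¹ ^ (i' + 1) * X (k + i') ω|) ^ (2 * n - i)
          ≤ (l⁻¹ ^ k * ∑' i' : ℕ, l⁻¹ ^ (i' + 1)) ^ (2 * n - i) :=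
        pow_le_pow_left₀ (mul_nonneg hik (abs_nonneg _)) hTle (2 * n - i)
      have h0a : (0:ℝ) ≤ |∑ i' ∈ Finset.range k, l⁻¹ ^ (i' + 1) * X (0 + i') ω| ^ i :=
        pow_nonneg (abs_nonneg _) i
      have h0b : (0:ℝ) ≤ (l⁻¹ ^ k * |∑' i' : ℕ, l⁻¹ ^ (i' + 1) * X (k + i') ω|) ^ (2 * n - i) :=
        pow_nonneg (by positivity) _
      have h0c : (0:ℝ) ≤ ((2 * n).choose i : ℝ) := Nat.cast_nonneg _
      have h0d : (0:ℝ) ≤ (∑' i' : ℕ, l⁻¹ ^ (i' + 1)) ^ i := pow_nonneg hB0 i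
      nlinarith [mul_le_mul hb1 hb2 h0b h0d]
  -- the main computation
  have hmain : m l (2 * n) = ∑ i ∈ Finset.range (2 * n + 1),
      ((2 * n).choose i : ℝ) * (l⁻¹ ^ k) ^ (2 * n - i)
        * ((∫ ω, (∑ i' ∈ Finset.range k, l⁻¹ ^ (i' + 1) * X (0 + i') ω) ^ i ∂P)
            * m l (2 * n - i)) := by
    calc m l (2 * n)
        = ∫ ω, (∑' i : ℕ, l⁻¹ ^ (i + 1) * X (0 + i) ω) ^ (2 * n) ∂P := hm2 (2 * n)
      _ = ∫ ω, ((∑ i ∈ Finset.range k, l⁻¹ ^ (i + 1) * X (0 + i) ω)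
            + l⁻¹ ^ k * ∑' i : ℕ, l⁻¹ ^ (i + 1) * X (k + i) ω) ^ (2 * n) ∂P := by
          refine integral_congr_ae ?_
          filter_upwards [hdecomp] with ω hω
          rw [hω]
      _ = ∫ ω, ∑ i ∈ Finset.range (2 * n + 1),
            (∑ i' ∈ Finset.range k, l⁻¹ ^ (i' + 1) * X (0 + i') ω) ^ i
              * (l⁻¹ ^ k * ∑' i' : ℕ, l⁻¹ ^ (i' + 1) * X (k + i') ω) ^ (2 * n - i)
              * ((2 * n).choose i : ℝ) ∂P := by
          refine integral_congr_ae (Filter.Eventually.of_forall fun ω => ?_)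
          simp only [add_pow]

      _ = ∑ i ∈ Finset.range (2 * n + 1), ∫ ω,
            (∑ i' ∈ Finset.range k, l⁻¹ ^ (i' + 1) * X (0 + i') ω) ^ i
              * (l⁻¹ ^ k * ∑' i' : ℕ, l⁻¹ ^ (i' + 1) * X (k + i') ω) ^ (2 * n - i)
              * ((2 * n).choose i : ℝ) ∂P :=
          integral_finset_sum _ (fun i _ => hIntTerm i)
      _ = ∑ i ∈ Finset.range (2 * n + 1),
            ((2 * n).choose i : ℝ) * (l⁻¹ ^ k) ^ (2 * n - i)
              * ((∫ ω, (∑ i' ∈ Finset.range k, l⁻¹ ^ (i' + 1) * X (0 + i') ω) ^ i ∂P)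
                  * m l (2 * n - i)) := by
          refine Finset.sum_congr rfl fun i _ => ?_
          have hrw : (fun ω =>
              (∑ i' ∈ Finset.range k, l⁻¹ ^ (i' + 1) * X (0 + i') ω) ^ i
                * (l⁻¹ ^ k * ∑' i' : ℕ, l⁻¹ ^ (i' + 1) * X (k + i') ω) ^ (2 * n - i)
                * ((2 * n).choose i : ℝ))
              = fun ω => (((2 * n).choose i : ℝ) * (l⁻¹ ^ k) ^ (2 * n - i))
                * ((∑ i' ∈ Finset.range k, l⁻¹ ^ (i' + 1) * X (0 + i') ω) ^ i
                    * (∑' i' : ℕ, l⁻¹ ^ (i' + 1) * X (k + i') ω) ^ (2 * n - i)) := by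
            funext ω; ring
          rw [hrw, MeasureTheory.integral_const_mul, hcross i (2 * n - i), mul_assoc]
  -- restrict to even indices
  obtain ⟨g, hg⟩ : ∃ g : ℕ → ℝ, g = fun i =>
      ((2 * n).choose i : ℝ) * (l⁻¹ ^ k) ^ (2 * n - i)
        * ((∫ ω, (∑ i' ∈ Finset.range k, l⁻¹ ^ (i' + 1) * X (0 + i') ω) ^ i ∂P)
            * m l (2 * n - i)) := ⟨_, rfl⟩
  have hfold : m l (2 * n) = ∑ i ∈ Finset.range (2 * n + 1), g i := by
    rw [hmain]
    exact Finset.sum_congr rfl fun i _ => by rw [hg]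
  have hsub : (Finset.range (n + 1)).image (fun u => 2 * u) ⊆ Finset.range (2 * n + 1) := by
    intro x hx
    obtain ⟨u, hu, rfl⟩ := Finset.mem_image.mp hx
    simp only [Finset.mem_range] at hu ⊢
    omega
  have hzero : ∀ x ∈ Finset.range (2 * n + 1),
      x ∉ (Finset.range (n + 1)).image (fun u => 2 * u) → g x = 0 := by
    intro x hx hnx
    have hodd : Odd x := by
      rcases Nat.even_or_odd x with he | ho
      · exfalso
        obtain ⟨u, rfl⟩ := he
        apply hnx
        refine Finset.mem_image.mpr ⟨u, ?_, by omega⟩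
        simp only [Finset.mem_range] at hx ⊢
        omega
      · exact ho
    rw [hg]
    simp only []
    rw [hqodd x hodd]
    ring
  have himg : ∑ i ∈ (Finset.range (n + 1)).image (fun u => 2 * u), g i
      = ∑ u ∈ Finset.range (n + 1), g (2 * u) :=
    Finset.sum_image (fun x _ y _ h => by omega)
  have heven : m l (2 * n) = ∑ u ∈ Finset.range (n + 1),
      (l⁻¹ ^ k) ^ (2 * n)
        * (((2 * n).choose (2 * u) : ℝ) * W k u l * m l (2 * n - 2 * u)) := by
    rw [hfold, ← Finset.sum_subset hsub hzero, himg]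
    refine Finset.sum_congr rfl fun u hu => ?_
    simp only [Finset.mem_range] at hu
    rw [hg]
    simp only []
    rw [hqeven u]
    rw [show (l⁻¹ ^ k) ^ (2 * n) = (l⁻¹ ^ k) ^ (2 * n - 2 * u) * (l⁻¹ ^ k) ^ (2 * u) from by
      rw [← pow_add]; congr 1; omega]
    ring
  rw [← Finset.mul_sum] at heven
  -- peel off u = 0 and reflect
  have hpeel : ∑ u ∈ Finset.range (n + 1),
      ((2 * n).choose (2 * u) : ℝ) * W k u l * m l (2 * n - 2 * u)
      = (∑ j ∈ Finset.range n,
          ((2 * n).choose (2 * j) : ℝ) * m l (2 * j) * W k (n - j) l) + m l (2 * n) := by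
    rw [Finset.sum_range_succ' (fun u => ((2 * n).choose (2 * u) : ℝ) * W k u l
      * m l (2 * n - 2 * u)) n]
    congr 1
    · rw [← Finset.sum_range_reflect]
      refine Finset.sum_congr rfl fun j hj => ?_
      simp only [Finset.mem_range] at hj
      rw [show n - 1 - j + 1 = n - j from by omega]
      rw [show 2 * n - 2 * (n - j) = 2 * j from by omega]
      rw [show (2 * n).choose (2 * (n - j)) = (2 * n).choose (2 * j) from by
        rw [show 2 * (n - j) = 2 * n - 2 * j from by omega]
        exact Nat.choose_symm (by omega)]
      ring
    · rw [Nat.mul_zero, Nat.choose_zero_right, Nat.sub_zero, Stmt6Aux.Wzero]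
      norm_num
  rw [hpeel] at heven
  have hmain2 := heven
  -- final algebra
  have hpinv : (l⁻¹ ^ k) ^ (2 * n) = (l ^ (2 * k * n))⁻¹ := by
    rw [← pow_mul, inv_pow, show k * (2 * n) = 2 * k * n from by ring]
  have hLgt : (1:ℝ) < l ^ (2 * k * n) := one_lt_pow₀ hl (by positivity)
  have hL0 : l ^ (2 * k * n) ≠ 0 := by positivity
  have hL1 : l ^ (2 * k * n) - 1 ≠ 0 := by nlinarith
  rw [hpinv] at hmain2
  rw [inv_mul_eq_div, eq_div_iff hL1]
  rw [inv_mul_eq_div, eq_div_iff hL0] at hmain2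
  linarith [hmain2]
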